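/- For each $k$ and each $S \ge 1$, there exists $R_0$ such that for all $R \ge R_0$, all $T > 0$, and all lattices $L$ of rank $k$ with $\operatorname{covol} L \le T^k$: if every basis $\{v_1,\dots,v_k\}$ of $L$ satisfies $(\sum_i \|v_i\|^2)^{1/2} \ge RT$, then $L$ contains a nonzero vector of length at most $T/S$. -/

import Mathlib

open Submodule MeasureTheory Module Set
open scoped ENNReal

noncomputable section Stmt7Aux

private abbrev Esp (k : ℕ) := EuclideanSpace ℝ (Fin k)

private lemma range_snoc' {n : ℕ} {α : Type*} (c : Fin n → α) (b : α) :
    Set.range (Fin.snoc c b : Fin (n+1) → α) = insert b (Set.range c) := by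
  ext x
  constructor
  · rintro ⟨i, rfl⟩
    refine Fin.lastCases ?_ ?_ i
    · simp
    · intro j; right; exact ⟨j, by simp⟩
  · rintro (rfl | ⟨i, rfl⟩)
    · exact ⟨Fin.last n, by simp⟩
    · exact ⟨i.castSucc, by simp⟩

private lemma finite_lattice_ball {k : ℕ} (bB : Basis (Fin k) ℝ (Esp k)) (N : ℝ) :
    {x : Esp k | x ∈ span ℤ (Set.range ⇑bB) ∧ ‖x‖ ≤ N}.Finite := by
  have h1 : IsClosed ((span ℤ (Set.range ⇑bB) : Submodule ℤ (Esp k)) : Set (Esp k)) :=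
    AddSubgroup.isClosed_of_discrete (H := (span ℤ (Set.range ⇑bB)).toAddSubgroup)
  have h2 : IsCompact (((span ℤ (Set.range ⇑bB) : Submodule ℤ (Esp k)) : Set (Esp k)) ∩
      Metric.closedBall 0 N) :=
    (isCompact_closedBall (0 : Esp k) N).inter_left h1
  have h3 : DiscreteTopology (((span ℤ (Set.range ⇑bB) : Submodule ℤ (Esp k)) : Set (Esp k)) ∩
      Metric.closedBall 0 N : Set (Esp k)) := by
    have : DiscreteTopology ((span ℤ (Set.range ⇑bB) : Submodule ℤ (Esp k)) : Set (Esp k)) := by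
      exact (inferInstance : DiscreteTopology (span ℤ (Set.range ⇑bB)))
    exact DiscreteTopology.of_subset this Set.inter_subset_left
  have h4 := h2.finite (isDiscrete_iff_discreteTopology.mpr h3)
  have : {x : Esp k | x ∈ span ℤ (Set.range ⇑bB) ∧ ‖x‖ ≤ N} =
      ((span ℤ (Set.range ⇑bB) : Submodule ℤ (Esp k)) : Set (Esp k)) ∩ Metric.closedBall 0 N := by
    ext x; simp [Metric.mem_closedBall, dist_zero_right]
  rwa [this]


private lemma stmt7_pow_ineq {T A : ℝ} (hT : 0 < T) (hA : 1 ≤ A) {j k : ℕ} (hjk : j < k) :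
    T ^ k < (T / A) ^ j * (2 * A ^ k * T) ^ (k - j) := by
  have hA0 : (0:ℝ) < A := by linarith
  obtain ⟨e, rfl⟩ : ∃ e, k = j + (e + 1) := ⟨k - j - 1, by omega⟩
  have hsub : j + (e + 1) - j = e + 1 := by omega
  rw [hsub]
  have honeA : ∀ n : ℕ, (1:ℝ) ≤ A ^ n := by
    intro n
    calc (1:ℝ) = A ^ 0 := (pow_zero A).symm
    _ ≤ A ^ n := pow_le_pow_right₀ hA (Nat.zero_le _)
  have h1 : A ^ j ≤ A ^ (j + (e+1)) := pow_le_pow_right₀ hA (by omega)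
  have h2 : A ^ (j + (e+1)) ≤ (A ^ (j + (e+1))) ^ (e+1) :=
    le_self_pow₀ (honeA _) (by omega)
  have h3 : (A ^ (j + (e+1))) ^ (e+1) < 2 ^ (e+1) * (A ^ (j + (e+1))) ^ (e+1) := by
    have h4 : (1:ℝ) < 2 ^ (e+1) := one_lt_pow₀ one_lt_two (by omega)
    have h5 : (0:ℝ) < (A ^ (j + (e+1))) ^ (e+1) := by positivity
    nlinarith
  have hkey : A ^ j < 2 ^ (e+1) * (A ^ (j + (e+1))) ^ (e+1) := by linarith
  rw [div_pow, mul_pow, mul_pow, pow_add T]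
  rw [div_mul_eq_mul_div, lt_div_iff₀ (by positivity : (0:ℝ) < A ^ j)]
  have hTj : (0:ℝ) < T ^ j := pow_pos hT j
  have hTe : (0:ℝ) < T ^ (e+1) := pow_pos hT (e+1)
  nlinarith [mul_pos hTj hTe]

set_option maxHeartbeats 1000000 in
private lemma exists_small_outside {k : ℕ} (hk : 0 < k) {S T : ℝ} (hS : 1 ≤ S) (hT : 0 < T)
    (bB : Basis (Fin k) ℝ (Esp k))
    (hvol : volume (ZSpan.fundamentalDomain bB) ≤ ENNReal.ofReal (T ^ k))
    (hshort : ∀ x ∈ span ℤ (Set.range ⇑bB), x ≠ 0 → T / S < ‖x‖)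
    (W : Submodule ℝ (Esp k)) (hW : W ≠ ⊤) :
    ∃ u ∈ span ℤ (Set.range ⇑bB), u ∉ W ∧
      ‖u‖ ≤ 2 * Real.sqrt k * (2 * S * Real.sqrt k) ^ k * T := by
  classical
  set A : ℝ := 2 * S * Real.sqrt k with hAdef
  have hsk1 : (1 : ℝ) ≤ Real.sqrt k := by
    rw [show (1:ℝ) = Real.sqrt 1 by simp]
    exact Real.sqrt_le_sqrt (by exact_mod_cast hk)
  have hsk0 : (0:ℝ) < Real.sqrt k := by linarith
  have hA2 : (2:ℝ) ≤ A := by nlinarith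
  have hA1 : (1:ℝ) ≤ A := by linarith
  have hA0 : (0:ℝ) < A := by linarith
  set j : ℕ := finrank ℝ W with hjdef
  have hjk : j < k := by
    have := Submodule.finrank_lt (K := ℝ) (V := Esp k) hW
    rwa [finrank_euclideanSpace_fin] at this
  -- orthonormal basis adapted to W
  set onbW := stdOrthonormalBasis ℝ W with honbW
  set v : Fin k → Esp k := fun i => if h : (i : ℕ) < j then (onbW ⟨i, h⟩ : Esp k) else 0 with hvdef
  have hv : Orthonormal ℝ (({i : Fin k | (i : ℕ) < j} : Set (Fin k)).restrict v) := by
    rw [orthonormal_iff_ite]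
    rintro ⟨a, ha⟩ ⟨b, hb⟩
    have ha' : (a : ℕ) < j := ha
    have hb' : (b : ℕ) < j := hb
    change inner ℝ (v a) (v b) = _
    simp only [Set.restrict_apply, hvdef, dif_pos ha', dif_pos hb']
    rw [← Submodule.coe_inner]
    rw [orthonormal_iff_ite.mp onbW.orthonormal]
    by_cases h : a = b
    · subst h; simp
    · rw [if_neg (by simpa [Fin.ext_iff] using h), if_neg (by simpa [Subtype.ext_iff, Fin.ext_iff] using h)]
  obtain ⟨ob, hob⟩ := hv.exists_orthonormalBasis_extension_of_card_eq
    (by simp [finrank_euclideanSpace_fin])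
  -- W is spanned by ob i for i < j
  have hWspan : W = span ℝ (Set.range (fun l : Fin j => ((onbW l : W) : Esp k))) := by
    have h1 : span ℝ (Set.range ⇑onbW.toBasis) = (⊤ : Submodule ℝ W) := onbW.toBasis.span_eq
    have h2 := congrArg (Submodule.map W.subtype) h1
    rw [Submodule.map_span, Submodule.map_subtype_top, ← Set.range_comp] at h2
    exact h2.symm.trans (by congr 1)
  have hWmem : ∀ x : Esp k, x ∈ W ↔ ∀ i : Fin k, j ≤ (i : ℕ) → ob.repr x i = 0 := by
    intro x
    constructor
    · intro hxW i hi
      rw [OrthonormalBasis.repr_apply_apply]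
      rw [hWspan] at hxW
      induction hxW using Submodule.span_induction with
      | mem y hy =>
        obtain ⟨l, rfl⟩ := hy
        have hl : ((Fin.castLE hjk.le l : Fin k) : ℕ) < j := l.2
        have : ob (Fin.castLE hjk.le l) = ((onbW l : W) : Esp k) := by
          rw [hob _ hl]
          simp only [hvdef, dif_pos hl]
          congr 1
        beta_reduce
        rw [← this]
        rw [orthonormal_iff_ite.mp ob.orthonormal]
        rw [if_neg]
        intro h
        rw [← h] at hl
        omega
      | zero => simp
      | add y z _ _ hy hz => rw [inner_add_right, hy, hz]; ring
      | smul a y _ hy => rw [inner_smul_right, hy]; ring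
    · intro h
      have := ob.sum_repr x
      rw [← this]
      apply Submodule.sum_mem
      intro i _
      by_cases hij : (i : ℕ) < j
      · apply Submodule.smul_mem
        rw [hob _ hij]
        simp only [hvdef, dif_pos hij]
        exact Submodule.coe_mem _
      · rw [h i (le_of_not_gt hij), zero_smul]
        exact Submodule.zero_mem _
  -- the box
  set aa : Fin k → ℝ := fun i => if (i : ℕ) < j then T / A else 2 * A ^ k * T with haa
  have haapos : ∀ i, 0 < aa i := by
    intro i
    by_cases h : (i:ℕ) < j
    · simp only [haa]; rw [if_pos h]; positivity
    · simp only [haa]; rw [if_neg h]; positivity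
  have haale : ∀ i, aa i ≤ 2 * A ^ k * T := by
    intro i
    by_cases h : (i:ℕ) < j
    · simp only [haa]; rw [if_pos h]
      have h1 : T / A ≤ T := div_le_self hT.le hA1
      have h2 : (1:ℝ) ≤ 2 * A ^ k := by
        have : (1:ℝ) ≤ A ^ k := by
          calc (1:ℝ) = A ^ 0 := (pow_zero A).symm
          _ ≤ A ^ k := pow_le_pow_right₀ hA1 (Nat.zero_le _)
        linarith
      nlinarith
    · simp only [haa]; rw [if_neg h]
  set sBox : Set (Esp k) := {y : Esp k | ∀ i, |ob.repr y i| ≤ aa i} with hsBox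
  have hsymm : ∀ x ∈ sBox, -x ∈ sBox := by
    intro x hx i
    rw [map_neg]
    have : (-(ob.repr x)) i = -(ob.repr x i) := rfl
    rw [this, abs_neg]
    exact hx i
  have hconv : Convex ℝ sBox := by
    intro x hx y hy a b ha hb hab
    intro i
    have heq : ob.repr (a • x + b • y) i = a * ob.repr x i + b * ob.repr y i := by
      simp only [map_add, LinearIsometryEquiv.map_smul]
      rfl
    rw [heq]
    calc |a * ob.repr x i + b * ob.repr y i| ≤ |a * ob.repr x i| + |b * ob.repr y i| :=
          abs_add_le _ _
    _ = a * |ob.repr x i| + b * |ob.repr y i| := by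
          rw [abs_mul, abs_mul, abs_of_nonneg ha, abs_of_nonneg hb]
    _ ≤ a * aa i + b * aa i := by
          have := hx i; have := hy i
          have h1 : a * |ob.repr x i| ≤ a * aa i := mul_le_mul_of_nonneg_left (hx i) ha
          have h2 : b * |ob.repr y i| ≤ b * aa i := mul_le_mul_of_nonneg_left (hy i) hb
          linarith
    _ = aa i := by rw [← add_mul, hab, one_mul]
  -- volume of the box
  have hmeaspi : MeasurableSet (Set.univ.pi fun i : Fin k => Set.Icc (-(aa i)) (aa i)) :=
    MeasurableSet.univ_pi fun i => measurableSet_Icc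
  have hbox_eq : sBox = ⇑ob.repr ⁻¹' (⇑(MeasurableEquiv.toLp 2 (Fin k → ℝ)).symm ⁻¹'
      (Set.univ.pi fun i => Set.Icc (-(aa i)) (aa i))) := by
    ext y
    simp only [hsBox, Set.mem_setOf_eq, Set.mem_preimage, Set.mem_pi, Set.mem_univ,
      forall_true_left, Set.mem_Icc, true_implies]
    constructor
    · intro h i; have := abs_le.mp (h i); exact ⟨this.1, this.2⟩
    · intro h i; exact abs_le.mpr (h i)
  have hcard : (Finset.univ.filter (fun i : Fin k => (i:ℕ) < j)).card = j := by
    have heq : (Finset.univ.filter (fun i : Fin k => (i:ℕ) < j)) =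
        Finset.Iio (⟨j, hjk⟩ : Fin k) := by
      ext i
      simp [Fin.lt_def]
    rw [heq, Fin.card_Iio]
  have hcard' : (Finset.univ.filter (fun i : Fin k => ¬ ((i:ℕ) < j))).card = k - j := by
    have := Finset.card_filter_add_card_filter_not
      (s := (Finset.univ : Finset (Fin k))) (p := fun i : Fin k => (i:ℕ) < j)
    rw [hcard, Finset.card_univ, Fintype.card_fin] at this
    omega
  have hvolbox : volume sBox = ENNReal.ofReal (∏ i, (2 * aa i)) := by
    rw [hbox_eq]
    rw [(ob.measurePreserving_repr).measure_preimage
      (((MeasurableEquiv.toLp 2 (Fin k → ℝ)).symm.measurable hmeaspi).nullMeasurableSet)]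
    rw [(EuclideanSpace.volume_preserving_symm_measurableEquiv_toLp (Fin k)).measure_preimage
      hmeaspi.nullMeasurableSet]
    rw [volume_pi_pi]
    simp only [Real.volume_Icc]
    rw [ENNReal.ofReal_prod_of_nonneg (fun i _ => by positivity)]
    refine Finset.prod_congr rfl fun i _ => ?_
    congr 1
    ring
  have hprodaa : ∏ i, aa i = (T / A) ^ j * (2 * A ^ k * T) ^ (k - j) := by
    simp only [haa]
    rw [Finset.prod_ite, Finset.prod_const, Finset.prod_const, hcard, hcard']
  have hkey : volume (ZSpan.fundamentalDomain bB) * 2 ^ finrank ℝ (Esp k) < volume sBox := by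
    calc volume (ZSpan.fundamentalDomain bB) * 2 ^ finrank ℝ (Esp k)
        ≤ ENNReal.ofReal (T ^ k) * 2 ^ finrank ℝ (Esp k) := mul_le_mul_left hvol _
    _ < volume sBox := by
        rw [hvolbox, finrank_euclideanSpace_fin]
        have h2keq : ((2:ℝ≥0∞)) ^ k = ENNReal.ofReal ((2:ℝ) ^ k) := by
          rw [ENNReal.ofReal_pow (by norm_num)]; norm_num
        rw [h2keq]
        rw [← ENNReal.ofReal_mul (by positivity)]
        rw [ENNReal.ofReal_lt_ofReal_iff (by
          have h1 : (0:ℝ) < ∏ i, (2 * aa i) := Finset.prod_pos (fun i _ => by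
            have := haapos i; linarith)
          exact h1)]
        have hprod2 : ∏ i : Fin k, (2 * aa i) = 2 ^ k * ∏ i, aa i := by
          rw [Finset.prod_mul_distrib, Finset.prod_const, Finset.card_univ, Fintype.card_fin]
        rw [hprod2, hprodaa]
        have := stmt7_pow_ineq hT hA1 hjk
        have h2k : (0:ℝ) < 2 ^ k := by positivity
        nlinarith
  -- Minkowski
  have fund := ZSpan.isAddFundamentalDomain bB volume
  have hcount : Countable (span ℤ (Set.range ⇑bB)).toAddSubgroup :=
    (inferInstance : Countable (span ℤ (Set.range ⇑bB)))
  obtain ⟨x, hx0, hxs⟩ := exists_ne_zero_mem_lattice_of_measure_mul_two_pow_lt_measure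
    (L := (span ℤ (Set.range ⇑bB)).toAddSubgroup) fund hsymm hconv hkey
  set u : Esp k := (x : Esp k) with hudef
  have hu : u ∈ span ℤ (Set.range ⇑bB) := by
    have := x.2
    rwa [Submodule.mem_toAddSubgroup] at this
  have hune0 : u ≠ 0 := by
    intro h
    apply hx0
    exact Subtype.coe_injective h
  have hcoords : ∀ i, |ob.repr u i| ≤ aa i := hxs
  have hnormu : ‖u‖ = Real.sqrt (∑ i, |ob.repr u i| ^ 2) := by
    rw [← LinearIsometryEquiv.norm_map ob.repr u, EuclideanSpace.norm_eq]
    simp only [Real.norm_eq_abs]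
  have huW : u ∉ W := by
    intro huW
    have hb : ∀ i : Fin k, |ob.repr u i| ^ 2 ≤ if (i:ℕ) < j then (T/A)^2 else 0 := by
      intro i
      by_cases hij : (i:ℕ) < j
      · rw [if_pos hij]
        have h5 := hcoords i
        simp only [haa] at h5; rw [if_pos hij] at h5
        exact pow_le_pow_left₀ (abs_nonneg _) h5 2
      · rw [if_neg hij, (hWmem u).mp huW i (le_of_not_gt hij)]
        simp
    have hsum : ∑ i, |ob.repr u i| ^ 2 ≤ (j:ℝ) * (T/A)^2 := by
      calc ∑ i, |ob.repr u i|^2 ≤ ∑ i : Fin k, (if (i:ℕ) < j then (T/A)^2 else (0:ℝ)) :=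
            Finset.sum_le_sum (fun i _ => hb i)
      _ = (j:ℝ) * (T/A)^2 := by
            rw [Finset.sum_ite, Finset.sum_const, Finset.sum_const]
            rw [hcard]
            simp [nsmul_eq_mul]
    have hA2eq : A^2 = 4*S^2*(k:ℝ) := by
      have hsq : Real.sqrt k ^ 2 = (k:ℝ) := Real.sq_sqrt (Nat.cast_nonneg k)
      rw [hAdef, mul_pow, mul_pow, hsq]; ring
    have hk0 : (0:ℝ) < k := by exact_mod_cast hk
    have h2 : (j:ℝ)*(T/A)^2 ≤ (T/(2*S))^2 := by
      have hjk2 : (j:ℝ) ≤ k := Nat.cast_le.mpr hjk.le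
      calc (j:ℝ)*(T/A)^2 ≤ (k:ℝ)*(T/A)^2 := by
            apply mul_le_mul_of_nonneg_right hjk2 (by positivity)
      _ = (T/(2*S))^2 := by
            rw [div_pow, div_pow, hA2eq]
            field_simp
            ring
    have hnorm : ‖u‖ ≤ T/(2*S) := by
      rw [hnormu]
      calc Real.sqrt (∑ i, |ob.repr u i|^2) ≤ Real.sqrt ((j:ℝ)*(T/A)^2) :=
            Real.sqrt_le_sqrt hsum
      _ ≤ Real.sqrt ((T/(2*S))^2) := Real.sqrt_le_sqrt h2
      _ = T/(2*S) := Real.sqrt_sq (by positivity)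
    have hlt := hshort u hu hune0
    have hS0 : (0:ℝ) < S := by linarith
    have hcon : T/S < T/(2*S) := lt_of_lt_of_le hlt hnorm
    rw [div_lt_div_iff₀ (by positivity) (by positivity)] at hcon
    nlinarith [mul_pos hT hS0]
  refine ⟨u, hu, huW, ?_⟩
  have hsum : ∑ i, |ob.repr u i|^2 ≤ (k:ℝ) * (2*A^k*T)^2 := by
    calc ∑ i, |ob.repr u i|^2 ≤ ∑ _i : Fin k, (2*A^k*T)^2 :=
          Finset.sum_le_sum (fun i _ =>
            pow_le_pow_left₀ (abs_nonneg _) (le_trans (hcoords i) (haale i)) 2)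
    _ = (k:ℝ)*(2*A^k*T)^2 := by
          rw [Finset.sum_const, Finset.card_univ, Fintype.card_fin]
          simp [nsmul_eq_mul]
  calc ‖u‖ ≤ Real.sqrt ((k:ℝ)*(2*A^k*T)^2) := by
        rw [hnormu]; exact Real.sqrt_le_sqrt hsum
  _ = Real.sqrt k * (2*A^k*T) := by
        rw [Real.sqrt_mul (Nat.cast_nonneg k), Real.sqrt_sq (by positivity)]
  _ = 2 * Real.sqrt k * (2*S*Real.sqrt k)^k * T := by rw [hAdef]; ring

set_option maxHeartbeats 1000000 in
private lemma stmt7_step {k : ℕ} {S T : ℝ} (hS : 1 ≤ S) (hT : 0 < T)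
    (bB : Basis (Fin k) ℝ (Esp k))
    (hvol : volume (ZSpan.fundamentalDomain bB) ≤ ENNReal.ofReal (T ^ k))
    (hshort : ∀ x ∈ span ℤ (Set.range ⇑bB), x ≠ 0 → T / S < ‖x‖)
    {j : ℕ} (hjk : j < k) (c : Fin j → Esp k)
    (hcL : ∀ i, c i ∈ span ℤ (Set.range ⇑bB))
    (hind : LinearIndependent ℝ c)
    (hprim : ∀ x ∈ span ℤ (Set.range ⇑bB), x ∈ span ℝ (Set.range c) →
      x ∈ span ℤ (Set.range c)) :
    ∃ bnew : Esp k, bnew ∈ span ℤ (Set.range ⇑bB) ∧ bnew ∉ span ℝ (Set.range c) ∧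
      ‖bnew‖ ≤ 2 * Real.sqrt k * (2 * S * Real.sqrt k) ^ k * T + ∑ i, ‖c i‖ ∧
      (∀ x ∈ span ℤ (Set.range ⇑bB),
        x ∈ span ℝ (Set.range (Fin.snoc c bnew : Fin (j+1) → Esp k)) →
        x ∈ span ℤ (Set.range (Fin.snoc c bnew : Fin (j+1) → Esp k))) := by
  classical
  set L := span ℤ (Set.range ⇑bB) with hLdef
  set W := span ℝ (Set.range c) with hWdef
  have hWfd : FiniteDimensional ℝ W := FiniteDimensional.span_of_finite ℝ (Set.finite_range c)
  have hWne : W ≠ ⊤ := by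
    intro h
    have h1 : finrank ℝ W = j := by
      rw [hWdef, finrank_span_eq_card hind, Fintype.card_fin]
    rw [h, finrank_top, finrank_euclideanSpace_fin] at h1
    omega
  obtain ⟨u, huL, huW, hunorm⟩ := exists_small_outside (by omega) hS hT bB hvol hshort W hWne
  -- the seminorm x ↦ ‖x - proj x‖ via the linear map Qlin
  set P := orthogonalProjection W with hPdef
  set Qlin : Esp k →ₗ[ℝ] Esp k := LinearMap.id - W.subtype.comp (P : Esp k →L[ℝ] W).toLinearMap
    with hQdef
  have hQapp : ∀ x, Qlin x = x - (P x : Esp k) := fun x => rfl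
  have hQ0 : ∀ x, Qlin x = 0 ↔ x ∈ W := by
    intro x
    rw [hQapp, sub_eq_zero, eq_comm]
    exact W.starProjection_eq_self_iff
  have hQW : ∀ x ∈ W, Qlin x = 0 := fun x hx => (hQ0 x).mpr hx
  have hQle : ∀ x, ‖Qlin x‖ ≤ ‖x‖ := by
    intro x
    have horth : (inner ℝ ((P x : Esp k)) (Qlin x) : ℝ) = 0 := by
      rw [hQapp]
      rw [real_inner_comm]
      exact W.starProjection_inner_eq_zero x (P x : Esp k) (SetLike.coe_mem _)
    have hxeq : x = (P x : Esp k) + Qlin x := by rw [hQapp]; abel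
    have hsq : ‖x‖^2 = ‖(P x : Esp k)‖^2 + ‖Qlin x‖^2 := by
      conv_lhs => rw [hxeq]
      rw [norm_add_sq_real, horth]
      ring
    have h1 : ‖Qlin x‖^2 ≤ ‖x‖^2 := by nlinarith [norm_nonneg ((P x : Esp k))]
    have := Real.sqrt_le_sqrt h1
    rwa [Real.sqrt_sq (norm_nonneg _), Real.sqrt_sq (norm_nonneg _)] at this
  -- basis of W from c
  set cW : Fin j → W := fun i => ⟨c i, Submodule.subset_span ⟨i, rfl⟩⟩ with hcWdef
  have hcWc : ∀ i, (cW i : Esp k) = c i := fun i => rfl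
  have hcWi : LinearIndependent ℝ cW := by
    apply LinearIndependent.of_comp W.subtype
    exact hind
  have hcWspan : ⊤ ≤ span ℝ (Set.range cW) := by
    have hmap : Submodule.map W.subtype (span ℝ (Set.range cW)) =
        Submodule.map W.subtype ⊤ := by
      rw [Submodule.map_span, Submodule.map_subtype_top, ← Set.range_comp]
      congr 1
    have := Submodule.map_injective_of_injective (Submodule.injective_subtype W) hmap
    rw [this]
  set bW : Basis (Fin j) ℝ W := Basis.mk hcWi hcWspan with hbWdef
  -- reduction map
  set red : Esp k → Esp k := fun x => x - ∑ i, ((⌊bW.repr (P x) i⌋ : ℝ) • c i) with hreddef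
  have hsumW : ∀ (g : Fin j → ℝ), ∑ i, g i • c i ∈ W := by
    intro g
    exact Submodule.sum_mem _ (fun i _ => Submodule.smul_mem _ _ (Submodule.subset_span ⟨i, rfl⟩))
  have hsumZ : ∀ (g : Fin j → ℤ), ∑ i, ((g i : ℝ) • c i) ∈ span ℤ (Set.range c) := by
    intro g
    refine Submodule.sum_mem _ (fun i _ => ?_)
    rw [Int.cast_smul_eq_zsmul]
    exact Submodule.smul_mem _ _ (Submodule.subset_span ⟨i, rfl⟩)
  have hspanZL : span ℤ (Set.range c) ≤ L := by
    rw [Submodule.span_le]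
    rintro x ⟨i, rfl⟩
    exact hcL i
  have hredL : ∀ x ∈ L, red x ∈ L := by
    intro x hx
    exact Submodule.sub_mem _ hx (hspanZL (hsumZ _))
  have hredQ : ∀ x, Qlin (red x) = Qlin x := by
    intro x
    have : red x = x - ∑ i, ((⌊bW.repr (P x) i⌋ : ℝ) • c i) := rfl
    rw [this, map_sub, hQW _ (hsumW _), sub_zero]
  have hPxsum : ∀ x, (P x : Esp k) = ∑ i, bW.repr (P x) i • c i := by
    intro x
    have h1 : (P x : W) = ∑ i, bW.repr (P x) i • bW i := (bW.sum_repr (P x)).symm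
    have h2 := congrArg (W.subtype) h1
    simp only [map_sum, _root_.map_smul] at h2
    convert h2 using 2 with i
    · rfl
    · simp [hbWdef, hcWc, Module.Basis.mk_apply]
  have hrednorm : ∀ x, ‖red x‖ ≤ ‖Qlin x‖ + ∑ i, ‖c i‖ := by
    intro x
    have hdecomp : red x = Qlin x + ∑ i, Int.fract (bW.repr (P x) i) • c i := by
      have h1 : ∑ i, Int.fract (bW.repr (P x) i) • c i
          = (P x : Esp k) - ∑ i, ((⌊bW.repr (P x) i⌋ : ℝ) • c i) := by
        conv_rhs => rw [hPxsum x]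
        rw [← Finset.sum_sub_distrib]
        refine Finset.sum_congr rfl fun i _ => ?_
        rw [← sub_smul]
        rfl
      rw [h1, hQapp]
      simp only [hreddef]
      abel
    rw [hdecomp]
    have h2 : ‖∑ i, Int.fract (bW.repr (P x) i) • c i‖ ≤ ∑ i, ‖c i‖ := by
      calc ‖∑ i, Int.fract (bW.repr (P x) i) • c i‖
          ≤ ∑ i, ‖Int.fract (bW.repr (P x) i) • c i‖ := norm_sum_le _ _
      _ ≤ ∑ i, ‖c i‖ := by
          refine Finset.sum_le_sum fun i _ => ?_
          rw [norm_smul, Real.norm_eq_abs, abs_of_nonneg (Int.fract_nonneg _)]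
          exact mul_le_of_le_one_left (norm_nonneg _) (Int.fract_lt_one _).le
    calc ‖Qlin x + ∑ i, Int.fract (bW.repr (P x) i) • c i‖
        ≤ ‖Qlin x‖ + ‖∑ i, Int.fract (bW.repr (P x) i) • c i‖ := norm_add_le _ _
    _ ≤ ‖Qlin x‖ + ∑ i, ‖c i‖ := by linarith
  -- the finite set of candidates
  set c₁ : ℝ := 2 * Real.sqrt k * (2 * S * Real.sqrt k) ^ k with hc₁def
  set N : ℝ := c₁ * T + ∑ i, ‖c i‖ with hNdef
  set 𝒜 : Set (Esp k) := {x | (x ∈ L ∧ ‖x‖ ≤ N) ∧ x ∉ W} with h𝒜def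
  have h𝒜fin : 𝒜.Finite := by
    apply (finite_lattice_ball bB N).subset
    rintro x ⟨⟨hx1, hx2⟩, _⟩
    exact ⟨hx1, hx2⟩
  have hredu𝒜 : red u ∈ 𝒜 := by
    refine ⟨⟨hredL u huL, ?_⟩, ?_⟩
    · calc ‖red u‖ ≤ ‖Qlin u‖ + ∑ i, ‖c i‖ := hrednorm u
      _ ≤ ‖u‖ + ∑ i, ‖c i‖ := by linarith [hQle u]
      _ ≤ N := by rw [hNdef]; linarith [hunorm]
    · intro hW'
      have h1 : Qlin (red u) = 0 := hQW _ hW'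
      rw [hredQ u] at h1
      exact huW ((hQ0 u).mp h1)
  obtain ⟨bnew, hbnew𝒜, hbmin⟩ := Set.exists_min_image 𝒜 (fun x => ‖Qlin x‖) h𝒜fin ⟨red u, hredu𝒜⟩
  obtain ⟨⟨hbnewL, hbnewnorm⟩, hbnewW⟩ := hbnew𝒜
  have hd0 : 0 < ‖Qlin bnew‖ := by
    rw [norm_pos_iff]
    intro h
    exact hbnewW ((hQ0 bnew).mp h)
  have hbu : ‖Qlin bnew‖ ≤ c₁ * T := by
    have h1 := hbmin (red u) hredu𝒜
    rw [hredQ u] at h1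
    calc ‖Qlin bnew‖ ≤ ‖Qlin u‖ := h1
    _ ≤ ‖u‖ := hQle u
    _ ≤ c₁ * T := hunorm
  have hglobal : ∀ x ∈ L, x ∉ W → ‖Qlin bnew‖ ≤ ‖Qlin x‖ := by
    intro x hxL hxW
    by_contra hlt
    push_neg at hlt
    have hredx𝒜 : red x ∈ 𝒜 := by
      refine ⟨⟨hredL x hxL, ?_⟩, ?_⟩
      · calc ‖red x‖ ≤ ‖Qlin x‖ + ∑ i, ‖c i‖ := hrednorm x
        _ ≤ N := by rw [hNdef]; nlinarith [hbu, hlt]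
      · intro hW'
        have h1 : Qlin (red x) = 0 := hQW _ hW'
        rw [hredQ x] at h1
        exact hxW ((hQ0 x).mp h1)
    have h2 := hbmin (red x) hredx𝒜
    rw [hredQ x] at h2
    linarith
  refine ⟨bnew, hbnewL, hbnewW, by rw [hNdef] at hbnewnorm; exact hbnewnorm, ?_⟩
  -- primitivity
  intro x hxL hxspan
  rw [range_snoc'] at hxspan ⊢
  obtain ⟨t, z, hz, rfl⟩ := Submodule.mem_span_insert.mp hxspan
  have hzW : z ∈ W := hz
  set n : ℤ := round t with hndef
  set y : Esp k := (t • bnew + z) - (n : ℝ) • bnew with hydef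
  have hyL : y ∈ L := by
    refine Submodule.sub_mem _ hxL ?_
    rw [Int.cast_smul_eq_zsmul]
    exact Submodule.smul_mem _ _ hbnewL
  have hQy : Qlin y = (t - (n:ℝ)) • Qlin bnew := by
    rw [hydef, map_sub, map_add, _root_.map_smul, _root_.map_smul, hQW z hzW, add_zero, ← sub_smul]
  have hyW : y ∈ W := by
    by_contra hyW'
    have h1 := hglobal y hyL hyW'
    rw [hQy, norm_smul, Real.norm_eq_abs] at h1
    have h2 : |t - (n:ℝ)| ≤ 1/2 := abs_sub_round t
    nlinarith
  have htn : t = (n : ℝ) := by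
    have h1 : Qlin y = 0 := hQW y hyW
    rw [hQy] at h1
    rcases smul_eq_zero.mp h1 with h | h
    · linarith [sub_eq_zero.mp (by linarith [h] : t - (n:ℝ) = 0)]
    · exact absurd ((hQ0 bnew).mp h) hbnewW
  have hyZ : y ∈ span ℤ (Set.range c) := by
    apply hprim y hyL
    exact hyW
  have hxy : t • bnew + z = y + (n : ℝ) • bnew := by
    rw [hydef]; abel
  rw [hxy]
  refine Submodule.add_mem _ ?_ ?_
  · exact Submodule.span_mono (Set.subset_insert _ _) hyZ
  · rw [Int.cast_smul_eq_zsmul]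
    exact Submodule.smul_mem _ _ (Submodule.subset_span (Set.mem_insert _ _))

private lemma stmt7_build {k : ℕ} {S T : ℝ} (hS : 1 ≤ S) (hT : 0 < T)
    (bB : Basis (Fin k) ℝ (Esp k))
    (hvol : volume (ZSpan.fundamentalDomain bB) ≤ ENNReal.ofReal (T ^ k))
    (hshort : ∀ x ∈ span ℤ (Set.range ⇑bB), x ≠ 0 → T / S < ‖x‖) :
    ∀ j : ℕ, j ≤ k → ∃ c : Fin j → Esp k,
      (∀ i, c i ∈ span ℤ (Set.range ⇑bB)) ∧ LinearIndependent ℝ c ∧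
      (∀ x ∈ span ℤ (Set.range ⇑bB), x ∈ span ℝ (Set.range c) → x ∈ span ℤ (Set.range c)) ∧
      (∀ i, ‖c i‖ ≤ 2 * Real.sqrt k * (2*S*Real.sqrt k)^k * ((k:ℝ)+1)^j * T) := by
  intro j
  induction j with
  | zero =>
    intro _
    refine ⟨fun i => i.elim0, fun i => i.elim0, linearIndependent_empty_type, ?_, fun i => i.elim0⟩
    intro x _ hxspan
    have hre : Set.range (fun i : Fin 0 => i.elim0 : Fin 0 → Esp k) = ∅ := Set.range_eq_empty _
    rw [hre] at hxspan ⊢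
    rw [Submodule.span_empty, Submodule.mem_bot] at hxspan
    rw [hxspan]
    exact Submodule.zero_mem _
  | succ j ih =>
    intro hj1
    obtain ⟨c, hcL, hind, hprim, hbound⟩ := ih (by omega)
    obtain ⟨bnew, h1, h2, h3, h4⟩ := stmt7_step hS hT bB hvol hshort
      (by omega : j < k) c hcL hind hprim
    refine ⟨Fin.snoc c bnew, ?_, ?_, h4, ?_⟩
    · intro i
      refine Fin.lastCases ?_ ?_ i
      · rw [Fin.snoc_last]; exact h1
      · intro i'; rw [Fin.snoc_castSucc]; exact hcL i'
    · exact linearIndependent_fin_snoc.mpr ⟨hind, h2⟩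
    · have hk0 : (0:ℝ) ≤ (k:ℝ) := Nat.cast_nonneg k
      have hc₁0 : (0:ℝ) ≤ 2 * Real.sqrt k * (2*S*Real.sqrt k)^k := by positivity
      set c₁ : ℝ := 2 * Real.sqrt k * (2*S*Real.sqrt k)^k with hc₁def
      have hone : (1:ℝ) ≤ ((k:ℝ)+1)^j := one_le_pow₀ (by linarith)
      have hP0 : (0:ℝ) < ((k:ℝ)+1)^j := by positivity
      have hjk' : (j:ℝ) ≤ (k:ℝ) := by exact_mod_cast (by omega : j ≤ k)
      intro i
      refine Fin.lastCases ?_ ?_ i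
      · rw [Fin.snoc_last]
        have hsum : ∑ i', ‖c i'‖ ≤ (j:ℝ) * (c₁ * ((k:ℝ)+1)^j * T) := by
          calc ∑ i', ‖c i'‖ ≤ ∑ _i' : Fin j, (c₁ * ((k:ℝ)+1)^j * T) :=
                Finset.sum_le_sum (fun i' _ => hbound i')
          _ = (j:ℝ) * (c₁ * ((k:ℝ)+1)^j * T) := by
                rw [Finset.sum_const, Finset.card_univ, Fintype.card_fin]
                simp [nsmul_eq_mul]
        have ht1 : c₁ * T ≤ c₁ * ((k:ℝ)+1)^j * T := by nlinarith [mul_nonneg hc₁0 hT.le]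
        have ht2 : (j:ℝ) * (c₁*((k:ℝ)+1)^j*T) ≤ (k:ℝ) * (c₁*((k:ℝ)+1)^j*T) :=
          mul_le_mul_of_nonneg_right hjk' (by positivity)
        calc ‖bnew‖ ≤ c₁ * T + ∑ i', ‖c i'‖ := h3
        _ ≤ c₁ * T + (j:ℝ)*(c₁*((k:ℝ)+1)^j*T) := by linarith
        _ ≤ c₁ * ((k:ℝ)+1)^(j+1) * T := by
            rw [pow_succ]
            nlinarith [ht1, ht2]
      · intro i'
        rw [Fin.snoc_castSucc]
        have hnn : (0:ℝ) ≤ c₁ * ((k:ℝ)+1)^j * T * (k:ℝ) := by positivity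
        calc ‖c i'‖ ≤ c₁ * ((k:ℝ)+1)^j * T := hbound i'
        _ ≤ c₁ * ((k:ℝ)+1)^(j+1) * T := by
            rw [pow_succ]
            nlinarith [hnn]

/-- For each `k` and each `S ≥ 1` there is `R₀` such that for all `R ≥ R₀`, all `T > 0`,
and every lattice `L ⊆ ℝ^k` of rank `k` (the ℤ-span of an ℝ-basis `B`) with covolume
`|det B| ≤ T^k`: if every ℤ-basis `C` of `L` satisfies `(∑ ‖Cᵢ‖²)^{1/2} ≥ RT`, then `L`
contains a nonzero vector of length at most `T/S`. -/
theorem stmt7 (k : ℕ) (S : ℝ) (hS : 1 ≤ S) :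
    ∃ R₀ : ℝ, ∀ R : ℝ, R₀ ≤ R → ∀ T : ℝ, 0 < T →
      ∀ B : Fin k → EuclideanSpace ℝ (Fin k), LinearIndependent ℝ B →
        |(Matrix.of fun i j => B j i).det| ≤ T ^ k →
        (∀ C : Fin k → EuclideanSpace ℝ (Fin k),
            Submodule.span ℤ (Set.range C) = Submodule.span ℤ (Set.range B) →
            R * T ≤ Real.sqrt (∑ i, ‖C i‖ ^ 2)) →
        ∃ x ∈ Submodule.span ℤ (Set.range B), x ≠ 0 ∧ ‖x‖ ≤ T / S := by

  classical
  refine ⟨Real.sqrt k * (2 * Real.sqrt k * (2*S*Real.sqrt k)^k * ((k:ℝ)+1)^k) + 1, ?_⟩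
  intro R hR T hT B hBind hdet hbasis
  rcases Nat.eq_zero_or_pos k with rfl | hk
  · -- k = 0 : contradiction from the hypothesis applied to B itself
    exfalso
    have h0 := hbasis B rfl
    have : Real.sqrt (∑ i : Fin 0, ‖B i‖ ^ 2) = 0 := by simp
    rw [this] at h0
    have hR1 : (1:ℝ) ≤ R := by
      simp only [Nat.cast_zero, Real.sqrt_zero, zero_mul, mul_zero, zero_add] at hR
      linarith
    nlinarith
  by_contra hcon
  push_neg at hcon
  have hshortB : ∀ x ∈ Submodule.span ℤ (Set.range B), x ≠ 0 → T / S < ‖x‖ := by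
    intro x hx hx0
    have := hcon x hx hx0
    linarith
  have hNE : Nonempty (Fin k) := ⟨⟨0, hk⟩⟩
  set bB : Basis (Fin k) ℝ (Esp k) :=
    basisOfLinearIndependentOfCardEqFinrank hBind (by simp) with hbBdef
  have hcoe : ⇑bB = B := coe_basisOfLinearIndependentOfCardEqFinrank hBind _
  -- covolume bound
  have hvol : volume (ZSpan.fundamentalDomain bB) ≤ ENNReal.ofReal (T ^ k) := by
    set e := WithLp.linearEquiv 2 ℝ (Fin k → ℝ) with hedef
    set b' : Basis (Fin k) ℝ (Fin k → ℝ) := bB.map e with hb'def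
    have h1 : volume (ZSpan.fundamentalDomain b') = ENNReal.ofReal |(Matrix.of ⇑b').det| :=
      ZSpan.volume_fundamentalDomain b'
    have h2 : ZSpan.fundamentalDomain b' = ⇑e '' ZSpan.fundamentalDomain bB :=
      (ZSpan.map_fundamentalDomain bB e).symm
    have h3 : volume (⇑e '' ZSpan.fundamentalDomain bB) = volume (ZSpan.fundamentalDomain bB) := by
      have himg : ⇑e '' ZSpan.fundamentalDomain bB =
          ⇑(MeasurableEquiv.toLp 2 (Fin k → ℝ)).symm.symm ⁻¹' ZSpan.fundamentalDomain bB := by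
        rw [← MeasurableEquiv.image_eq_preimage_symm]
        rfl
      rw [himg]
      exact (MeasurePreserving.symm _
          (EuclideanSpace.volume_preserving_symm_measurableEquiv_toLp (Fin k))).measure_preimage
        (ZSpan.fundamentalDomain_measurableSet bB).nullMeasurableSet
    have h4 : |(Matrix.of ⇑b').det| = |(Matrix.of fun i j => B j i).det| := by
      have hmat : (Matrix.of ⇑b') = (Matrix.of fun i j => B j i).transpose := by
        ext i j'
        show b' i j' = B i j'
        rw [hb'def, Basis.map_apply, hcoe]
        rfl
      rw [hmat, Matrix.det_transpose]
    calc volume (ZSpan.fundamentalDomain bB) = volume (ZSpan.fundamentalDomain b') := by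
          rw [h2, h3]
    _ = ENNReal.ofReal |(Matrix.of ⇑b').det| := h1
    _ = ENNReal.ofReal |(Matrix.of fun i j => B j i).det| := by rw [h4]
    _ ≤ ENNReal.ofReal (T^k) := ENNReal.ofReal_le_ofReal hdet
  rw [← hcoe] at hshortB hbasis hcon
  obtain ⟨c, hcL, hcind, hcprim, hcbound⟩ :=
    stmt7_build hS hT bB hvol hshortB k le_rfl
  have hspan_top : span ℝ (Set.range c) = ⊤ :=
    hcind.span_eq_top_of_card_eq_finrank (by simp)
  have hCspan : span ℤ (Set.range c) = span ℤ (Set.range ⇑bB) := by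
    apply le_antisymm
    · rw [Submodule.span_le]
      rintro x ⟨i, rfl⟩
      exact hcL i
    · rw [Submodule.span_le]
      intro x hx
      exact hcprim x (Submodule.subset_span hx) (by rw [hspan_top]; trivial)
  have hRT := hbasis c hCspan
  set c₁ : ℝ := 2 * Real.sqrt k * (2*S*Real.sqrt k)^k with hc₁def
  set M : ℝ := c₁ * ((k:ℝ)+1)^k * T with hMdef
  have hM0 : 0 ≤ M := by positivity
  have hsum : ∑ i, ‖c i‖ ^ 2 ≤ (k:ℝ) * M^2 := by
    calc ∑ i, ‖c i‖^2 ≤ ∑ _i : Fin k, M^2 :=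
          Finset.sum_le_sum (fun i _ => pow_le_pow_left₀ (norm_nonneg _) (hcbound i) 2)
    _ = (k:ℝ) * M^2 := by
          rw [Finset.sum_const, Finset.card_univ, Fintype.card_fin]
          simp [nsmul_eq_mul]
  have hsqrt : Real.sqrt (∑ i, ‖c i‖^2) ≤ Real.sqrt k * M := by
    calc Real.sqrt (∑ i, ‖c i‖^2) ≤ Real.sqrt ((k:ℝ) * M^2) := Real.sqrt_le_sqrt hsum
    _ = Real.sqrt k * M := by
        rw [Real.sqrt_mul (Nat.cast_nonneg k), Real.sqrt_sq hM0]
  have hfin : Real.sqrt k * M = Real.sqrt k * (c₁ * ((k:ℝ)+1)^k) * T := by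
    rw [hMdef]; ring
  have hsk0 : (0:ℝ) ≤ Real.sqrt k * (c₁ * ((k:ℝ)+1)^k) := by positivity
  nlinarith [hRT, hsqrt, hfin, hR, mul_le_mul_of_nonneg_right hR hT.le]

end Stmt7Aux
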